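/- Bipartite matching as matrix rank: for a bipartite graph G = (U, V; E) with |U| = n, |V| = m, consider the n×m matrix A over K(x_e : e ∈ E) whose (i,j) entry is x_{ij} if ij ∈ E and 0 otherwise, with algebraically independent indeterminates x_e. Then rank A equals the maximum size of a matching of G. -/

import Mathlib

open Matrix MvPolynomial

/-- The generic bipartite-graph matrix of a bipartite graph with color classes `Fin n`,
`Fin m` and edge set `E`: the `(i,j)` entry is the indeterminate `x_{(i,j)}` if
`(i,j) ∈ E`, and `0` otherwise, over the rational function field `K(x_e : e ∈ E)`. -/
noncomputable def bipartiteMatrix {K : Type*} [Field K] {n m : ℕ}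
    (E : Finset (Fin n × Fin m)) :
    Matrix (Fin n) (Fin m) (FractionRing (MvPolynomial (Fin n × Fin m) K)) :=
  Matrix.of fun i j =>
    if (i, j) ∈ E then
      algebraMap (MvPolynomial (Fin n × Fin m) K) _ (MvPolynomial.X (i, j))
    else 0

lemma aux_extract {F V ι : Type*} [Field F] [AddCommGroup V] [Module F V] [Fintype ι]
    (v : ι → V) (r : ℕ) (hr : Module.finrank F (Submodule.span F (Set.range v)) = r) :
    ∃ g : Fin r → ι, Function.Injective g ∧ LinearIndependent F (v ∘ g) := by
  classical
  obtain ⟨b, hbsub, hbspan, hbli⟩ := exists_linearIndependent F (Set.range v)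
  have hbfin : b.Finite := (Set.finite_range v).subset hbsub
  haveI := hbfin.fintype
  have hcard : Fintype.card b = r := by
    rw [← Set.toFinset_card, ← finrank_span_set_eq_card hbli]
    rwa [hbspan]
  let e : Fin r ≃ b := (Fintype.equivFinOfCardEq hcard).symm
  choose idx hidx using fun x : b => hbsub x.2
  refine ⟨fun k => idx (e k), ?_, ?_⟩
  · intro k l hkl
    have : ((e k : V)) = ((e l : V)) := by rw [← hidx (e k), ← hidx (e l)]; exact congrArg v hkl
    exact e.injective (Subtype.ext this)
  · have heq : (v ∘ fun k => idx (e k)) = (fun x : b => (x : V)) ∘ e := by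
      funext k; simp [Function.comp, hidx]
    rw [heq]
    exact hbli.comp e e.injective

noncomputable def polyMatrix {K : Type*} [Field K] {n m : ℕ} (E : Finset (Fin n × Fin m)) :
    Matrix (Fin n) (Fin m) (MvPolynomial (Fin n × Fin m) K) :=
  Matrix.of fun i j => if (i, j) ∈ E then MvPolynomial.X (i, j) else 0

lemma det_polySubmatrix_ne_zero {K : Type*} [Field K] {n m : ℕ} {E : Finset (Fin n × Fin m)}
    {k : ℕ} {f : Fin k → Fin n} {g : Fin k → Fin m}
    (hf : Function.Injective f) (hg : Function.Injective g)
    (hfg : ∀ i, (f i, g i) ∈ E) :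
    ((polyMatrix (K := K) E).submatrix f g).det ≠ 0 := by
  classical
  set v : Fin n × Fin m → K := fun e =>
    if e ∈ Finset.image (fun i => (f i, g i)) Finset.univ then 1 else 0 with hv
  intro hdet
  have h1 : (MvPolynomial.eval v) ((polyMatrix (K := K) E).submatrix f g).det = 0 := by
    rw [hdet]; simp
  rw [RingHom.map_det, RingHom.mapMatrix_apply] at h1
  have h2 : ((polyMatrix (K := K) E).submatrix f g).map (MvPolynomial.eval v) = 1 := by
    ext i j
    by_cases hij : i = j
    · subst hij
      simp only [Matrix.map_apply, Matrix.submatrix_apply, polyMatrix, Matrix.of_apply,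
        if_pos (hfg i), MvPolynomial.eval_X, Matrix.one_apply_eq, hv]
      rw [if_pos]
      exact Finset.mem_image_of_mem _ (Finset.mem_univ i)
    · have hnot : (f i, g j) ∉ Finset.image (fun i => (f i, g i)) Finset.univ := by
        simp only [Finset.mem_image, Finset.mem_univ, true_and, not_exists]
        intro l hl
        have h1 : f l = f i := congrArg Prod.fst hl
        have h2 : g l = g j := congrArg Prod.snd hl
        exact hij ((hf h1) ▸ (hg h2) ▸ rfl)
      simp only [Matrix.map_apply, Matrix.submatrix_apply, polyMatrix, Matrix.of_apply, hv]
      rw [Matrix.one_apply_ne hij]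
      by_cases hE : (f i, g j) ∈ E
      · rw [if_pos hE, MvPolynomial.eval_X]
        exact if_neg hnot
      · rw [if_neg hE]; simp
  rw [h2, Matrix.det_one] at h1
  exact one_ne_zero h1

lemma bipartiteMatrix_eq_map {K : Type*} [Field K] {n m : ℕ} (E : Finset (Fin n × Fin m)) :
    bipartiteMatrix (K := K) E =
      (polyMatrix (K := K) E).map
        (algebraMap (MvPolynomial (Fin n × Fin m) K) (FractionRing (MvPolynomial (Fin n × Fin m) K))) := by
  ext i j
  by_cases h : (i, j) ∈ E <;> simp [bipartiteMatrix, polyMatrix, h]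

lemma exists_matching_of_det_ne_zero {K : Type*} [Field K] {n m : ℕ}
    {E : Finset (Fin n × Fin m)} {k : ℕ} {f : Fin k → Fin n} {g : Fin k → Fin m}
    (hf : Function.Injective f) (hg : Function.Injective g)
    (hdet : ((bipartiteMatrix (K := K) E).submatrix f g).det ≠ 0) :
    ∃ M : Finset (Fin n × Fin m), M ⊆ E ∧
      (∀ e ∈ M, ∀ f' ∈ M, e ≠ f' → e.1 ≠ f'.1 ∧ e.2 ≠ f'.2) ∧ M.card = k := by
  classical
  have hσ : ∃ σ : Equiv.Perm (Fin k), ∀ i, (f (σ i), g i) ∈ E := by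
    by_contra h
    push_neg at h
    apply hdet
    rw [Matrix.det_apply]
    apply Finset.sum_eq_zero
    intro σ _
    obtain ⟨i, hi⟩ := h σ
    have hz : (bipartiteMatrix (K := K) E).submatrix f g (σ i) i = 0 := by
      simp [bipartiteMatrix, Matrix.submatrix_apply, if_neg hi]
    have hp := Finset.prod_eq_zero (f := fun j => (bipartiteMatrix (K := K) E).submatrix f g (σ j) j)
      (Finset.mem_univ i) hz
    rw [hp]; simp
  obtain ⟨σ, hσ⟩ := hσ
  refine ⟨Finset.image (fun i => (f (σ i), g i)) Finset.univ, ?_, ?_, ?_⟩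
  · intro e he
    simp only [Finset.mem_image, Finset.mem_univ, true_and] at he
    obtain ⟨i, rfl⟩ := he
    exact hσ i
  · intro e he f' hf' hne
    simp only [Finset.mem_image, Finset.mem_univ, true_and] at he hf'
    obtain ⟨i, rfl⟩ := he
    obtain ⟨j, rfl⟩ := hf'
    constructor
    · intro h1
      exact hne (by rw [σ.injective (hf h1)])
    · intro h2
      exact hne (by rw [hg h2])
  · rw [Finset.card_image_of_injective _ (fun i j hij => hg (congrArg Prod.snd hij))]
    exact Finset.card_univ.trans (Fintype.card_fin k)

lemma matching_card_le_rank {K : Type*} [Field K] {n m : ℕ} {E : Finset (Fin n × Fin m)}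
    {M : Finset (Fin n × Fin m)} (hsub : M ⊆ E)
    (hmatch : ∀ e ∈ M, ∀ f ∈ M, e ≠ f → e.1 ≠ f.1 ∧ e.2 ≠ f.2) :
    M.card ≤ (bipartiteMatrix (K := K) E).rank := by
  classical
  set F := FractionRing (MvPolynomial (Fin n × Fin m) K)
  set A := bipartiteMatrix (K := K) E with hA
  let e : M ≃ Fin M.card := M.equivFin
  let f : Fin M.card → Fin n := fun i => ((e.symm i : Fin n × Fin m)).1
  let g : Fin M.card → Fin m := fun i => ((e.symm i : Fin n × Fin m)).2
  have hedge : ∀ i, (f i, g i) ∈ M := fun i => (e.symm i).2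
  have hf : Function.Injective f := by
    intro i j hij
    by_cases hne : (e.symm i : Fin n × Fin m) = (e.symm j : Fin n × Fin m)
    · exact e.symm.injective (Subtype.ext hne)
    · exact absurd hij (hmatch _ (e.symm i).2 _ (e.symm j).2 hne).1
  have hg : Function.Injective g := by
    intro i j hij
    by_cases hne : (e.symm i : Fin n × Fin m) = (e.symm j : Fin n × Fin m)
    · exact e.symm.injective (Subtype.ext hne)
    · exact absurd hij (hmatch _ (e.symm i).2 _ (e.symm j).2 hne).2
  have hfE : ∀ i, (f i, g i) ∈ E := fun i => hsub (hedge i)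
  have hpoly := det_polySubmatrix_ne_zero (K := K) hf hg hfE
  have hdet : (A.submatrix f g).det ≠ 0 := by
    rw [hA, bipartiteMatrix_eq_map, Matrix.submatrix_map]
    intro h0
    apply hpoly
    apply IsFractionRing.injective (MvPolynomial (Fin n × Fin m) K) F
    rw [map_zero, RingHom.map_det]
    exact h0
  have hB : IsUnit (A.submatrix f g) :=
    (Matrix.isUnit_iff_isUnit_det _).mpr (isUnit_iff_ne_zero.mpr hdet)
  have hcols : LinearIndependent F (fun j => (A.submatrix f g)ᵀ j) :=
    Matrix.linearIndependent_cols_iff_isUnit.mpr hB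
  have hli : LinearIndependent F (fun j => Aᵀ (g j)) := by
    apply LinearIndependent.of_comp (LinearMap.funLeft F F f)
    exact hcols
  have h1 : Module.finrank F (Submodule.span F (Set.range fun j => Aᵀ (g j))) = M.card := by
    rw [finrank_span_eq_card hli, Fintype.card_fin]
  rw [Matrix.rank_eq_finrank_span_cols, ← h1]
  apply Submodule.finrank_mono
  apply Submodule.span_mono
  rintro x ⟨j, rfl⟩
  exact ⟨g j, rfl⟩

/-- Bipartite matching as matrix rank: the rank of the generic bipartite-graph matrix of
`G = (U, V; E)` equals the maximum size of a matching of `G` (a set of pairwise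
vertex-disjoint edges). -/
theorem bipartite_rank_eq_max_matching {K : Type*} [Field K] {n m : ℕ}
    (E : Finset (Fin n × Fin m)) :
    IsGreatest
      {k : ℕ | ∃ M : Finset (Fin n × Fin m), M ⊆ E ∧
        (∀ e ∈ M, ∀ f ∈ M, e ≠ f → e.1 ≠ f.1 ∧ e.2 ≠ f.2) ∧ M.card = k}
      (bipartiteMatrix (K := K) E).rank := by
  classical
  set F := FractionRing (MvPolynomial (Fin n × Fin m) K)
  set A := bipartiteMatrix (K := K) E with hA
  constructor
  · obtain ⟨g, hginj, hgli⟩ := aux_extract Aᵀ A.rank (Matrix.rank_eq_finrank_span_cols A).symm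
    let D : Matrix (Fin A.rank) (Fin n) F := Matrix.of fun kk i => A i (g kk)
    have hD : D.rank = A.rank := by
      have hcard := finrank_span_eq_card hgli
      rw [← Matrix.rank_transpose D, Matrix.rank_eq_finrank_span_cols,
        show Dᵀ.col = Aᵀ ∘ g from rfl]
      simpa using hcard
    have h2 : Module.finrank F (Submodule.span F (Set.range Dᵀ)) = A.rank := by
      rw [show Set.range Dᵀ = Set.range D.col from rfl, ← Matrix.rank_eq_finrank_span_cols, hD]
    obtain ⟨f, hfinj, hfli⟩ := aux_extract Dᵀ A.rank h2
    have hrows : LinearIndependent F (fun i => (A.submatrix f g) i) := hfli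
    have hB : IsUnit (A.submatrix f g) := Matrix.linearIndependent_rows_iff_isUnit.mp hrows
    have hdet : (A.submatrix f g).det ≠ 0 :=
      isUnit_iff_ne_zero.mp ((Matrix.isUnit_iff_isUnit_det _).mp hB)
    exact exists_matching_of_det_ne_zero hfinj hginj hdet
  · rintro k ⟨M, hsub, hmatch, rfl⟩
    exact matching_card_le_rank hsub hmatch
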